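/- Probability mass function of the balls-into-bins mechanism: let m, s, k, n be positive integers with s ≤ m, p ∈ [0,1], and let S ⊆ [m] with |S| = s. Let M(S) be the random occupancy vector in ℕ^m produced by the balls-into-bins mechanism M^BIB(m,s,k,n,p) on input S. Then for any vector W = (w₁,…,w_m) ∈ ℕ^m with total w = w₁ + ⋯ + w_m satisfying 1 + k ≤ w ≤ 1 + k + n, Pr[M(S) = W] = C(n, w−1−k) · p^{w−1−k} · (1−p)^{n−w+1+k} · ((w−1)! / (s · ∏_{i=1}^m w_i!)) · m^{−(w−1)} · (∑_{i∈S} w_i), where C(n, j) denotes the binomial coefficient. -/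

import Mathlib

open scoped ENNReal

noncomputable def uniformBin (m : ℕ) (hm : 0 < m) : PMF (Fin m) :=
  PMF.uniformOfFinset Finset.univ
    (Finset.univ_nonempty_iff.mpr (Fin.pos_iff_nonempty.mp hm))

/-- Sum of `n` independent copies of a random multiset. -/
noncomputable def repeatMultiset {α : Type*} (ν : PMF (Multiset α)) : ℕ → PMF (Multiset α)
  | 0 => PMF.pure 0
  | n + 1 => ν.bind fun s => (repeatMultiset ν n).map (s + ·)

/-- `PMF.bernoulli` with its older signature (`p : ℝ≥0∞`). -/
noncomputable def bernoulliENNReal (p : ℝ≥0∞) (h : p ≤ 1) : PMF Bool :=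
  PMF.ofFintype (fun b => cond b p (1 - p)) (by simp [h])

/-- With probability `p`, one draw from `ν`; otherwise nothing. -/
noncomputable def trialM {α : Type*} (ν : PMF α) (p : ℝ≥0∞) (hp : p ≤ 1) : PMF (Multiset α) :=
  (bernoulliENNReal p hp).bind fun b => if b then ν.map (fun x => {x}) else PMF.pure 0

/-- The balls-into-bins mechanism. -/
noncomputable def MBIB (m k n : ℕ) (hm : 0 < m) (p : ℝ≥0∞) (hp : p ≤ 1)
    (S : Finset (Fin m)) (hS : S.Nonempty) : PMF (Multiset (Fin m)) :=
  (PMF.uniformOfFinset S hS).bind fun x =>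
    (repeatMultiset ((uniformBin m hm).map (fun y => {y})) k).bind fun A =>
      (repeatMultiset (trialM (uniformBin m hm) p hp) n).map fun C => {x} + A + C



lemma map_add_apply {α : Type*} [DecidableEq α] (μ : PMF (Multiset α)) (A B : Multiset α) :
    (μ.map (A + ·)) B = if A ≤ B then μ (B - A) else 0 := by
  rw [PMF.map_apply]
  split_ifs with h
  · refine (tsum_eq_single (B - A) fun C hC => ?_).trans ?_
    · rw [if_neg]
      intro hBC
      exact hC (by rw [hBC, add_tsub_cancel_left])
    · rw [if_pos (by rw [add_tsub_cancel_of_le h])]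
  · refine (tsum_congr fun C => ?_).trans tsum_zero
    rw [if_neg]
    intro hBC
    exact h (hBC ▸ le_add_right le_rfl)

lemma inv_factorial_pred {c : ℕ} (hc : 0 < c) :
    (((c - 1).factorial : ℝ≥0∞))⁻¹ = c * ((c.factorial : ℝ≥0∞))⁻¹ := by
  have h : (c.factorial : ℝ≥0∞) = c * (c - 1).factorial := by
    exact_mod_cast (Nat.mul_factorial_pred hc.ne').symm
  rw [h, ENNReal.mul_inv (Or.inr (ENNReal.natCast_ne_top _))
      (Or.inl (ENNReal.natCast_ne_top _)), ← mul_assoc,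
    ENNReal.mul_inv_cancel (by exact_mod_cast hc.ne') (ENNReal.natCast_ne_top _), one_mul]

noncomputable def multc {m : ℕ} (B : Multiset (Fin m)) : ℝ≥0∞ :=
  ((Multiset.card B).factorial : ℝ≥0∞) * ∏ i : Fin m, (((B.count i).factorial : ℝ≥0∞))⁻¹

lemma multc_zero (m : ℕ) : multc (0 : Multiset (Fin m)) = 1 := by
  simp [multc]

lemma multc_erase {m : ℕ} (B : Multiset (Fin m)) {y : Fin m} (hy : y ∈ B) :
    multc (B.erase y) = ((Multiset.card B - 1).factorial : ℝ≥0∞) * (B.count y) *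
      ∏ i : Fin m, (((B.count i).factorial : ℝ≥0∞))⁻¹ := by
  have hcard : Multiset.card (B.erase y) = Multiset.card B - 1 := by
    rw [Multiset.card_erase_of_mem hy]; rfl
  have hcy : 0 < B.count y := Multiset.count_pos.mpr hy
  have hprod : ∏ i : Fin m, ((((B.erase y).count i).factorial : ℝ≥0∞))⁻¹ =
      (B.count y) * ∏ i : Fin m, (((B.count i).factorial : ℝ≥0∞))⁻¹ := by
    rw [← Finset.mul_prod_erase Finset.univ _ (Finset.mem_univ y),
        ← Finset.mul_prod_erase Finset.univ
          (fun i => (((B.count i).factorial : ℝ≥0∞))⁻¹) (Finset.mem_univ y),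
        Multiset.count_erase_self, inv_factorial_pred hcy]
    have hrest : ∏ x ∈ Finset.univ.erase y, ((((B.erase y).count x).factorial : ℝ≥0∞))⁻¹ =
        ∏ x ∈ Finset.univ.erase y, (((B.count x).factorial : ℝ≥0∞))⁻¹ :=
      Finset.prod_congr rfl fun i hi => by
        rw [Multiset.count_erase_of_ne (Finset.ne_of_mem_erase hi)]
    rw [hrest]; ring
  rw [multc, hcard, hprod]; ring

lemma sum_multc_erase {m : ℕ} (B : Multiset (Fin m)) (hB : B ≠ 0) :
    ∑ y : Fin m, (if y ∈ B then multc (B.erase y) else 0) = multc B := by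
  have hpos : 0 < Multiset.card B := Multiset.card_pos.mpr hB
  have : ∀ y : Fin m, (if y ∈ B then multc (B.erase y) else 0) =
      ((Multiset.card B - 1).factorial : ℝ≥0∞) * (B.count y) *
        ∏ i : Fin m, (((B.count i).factorial : ℝ≥0∞))⁻¹ := by
    intro y
    split_ifs with hy
    · exact multc_erase B hy
    · rw [Multiset.count_eq_zero_of_notMem hy]; simp
  rw [Finset.sum_congr rfl fun y _ => this y]
  rw [← Finset.sum_mul, ← Finset.mul_sum, ← Nat.cast_sum]
  have hsum : ∑ y : Fin m, B.count y = Multiset.card B := Multiset.sum_count_eq_card (by simp)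
  have hfac : ((Multiset.card B : ℝ≥0∞)) * ((Multiset.card B - 1).factorial : ℝ≥0∞) =
      ((Multiset.card B).factorial : ℝ≥0∞) := by exact_mod_cast Nat.mul_factorial_pred hpos.ne'
  rw [hsum, multc, ← hfac]
  ring


lemma step_alg (p q M I : ℝ≥0∞) (n j : ℕ) (hj : 1 ≤ j) :
    p * (I * ((n.choose (j - 1) : ℝ≥0∞) * p ^ (j - 1) * q ^ (n - (j - 1)) * I ^ (j - 1) * M))
      + q * ((n.choose j : ℝ≥0∞) * p ^ j * q ^ (n - j) * M * I ^ j)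
    = ((n + 1).choose j : ℝ≥0∞) * p ^ j * q ^ (n + 1 - j) * M * I ^ j := by
  obtain ⟨i, rfl⟩ : ∃ i, j = i + 1 := ⟨j - 1, by omega⟩
  simp only [Nat.add_sub_cancel]
  rcases le_or_gt (i + 1) n with hle | hlt
  · obtain ⟨d, rfl⟩ : ∃ d, n = i + 1 + d := ⟨n - (i + 1), by omega⟩
    have e1 : i + 1 + d - i = d + 1 := by omega
    have e2 : i + 1 + d - (i + 1) = d := by omega
    have e3 : i + 1 + d + 1 - (i + 1) = d + 1 := by omega
    rw [e1, e2, e3, Nat.choose_succ_succ' (i + 1 + d) i]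
    push_cast
    ring
  · rcases eq_or_lt_of_le (Nat.lt_succ_iff.mp hlt) with heq | hlt2
    · obtain rfl : n = i := heq
      simp only [Nat.sub_self, Nat.add_sub_cancel_left, pow_zero, Nat.choose_self,
        Nat.choose_succ_self, Nat.cast_zero, Nat.cast_one]
      have : n - (n + 1) = 0 := by omega
      rw [this, pow_zero]
      ring
    · have c1 : n.choose i = 0 := Nat.choose_eq_zero_of_lt (by omega)
      have c2 : n.choose (i + 1) = 0 := Nat.choose_eq_zero_of_lt (by omega)
      have c3 : (n + 1).choose (i + 1) = 0 := Nat.choose_eq_zero_of_lt (by omega)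
      rw [c1, c2, c3]
      push_cast
      ring

section
variable {m : ℕ} (hm : 0 < m)

lemma uniformBin_apply (y : Fin m) : uniformBin m hm y = (m : ℝ≥0∞)⁻¹ := by
  simp [uniformBin, PMF.uniformOfFinset_apply]

lemma bind_map_singleton_apply (F : Multiset (Fin m) → PMF (Multiset (Fin m)))
    (B : Multiset (Fin m)) :
    (((uniformBin m hm).map (fun y => ({y} : Multiset (Fin m)))).bind F) B
      = ∑ y : Fin m, (m : ℝ≥0∞)⁻¹ * F {y} B := by
  rw [PMF.bind_map, PMF.bind_apply, tsum_fintype]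
  exact Finset.sum_congr rfl fun y _ => by rw [Function.comp_apply, uniformBin_apply]

lemma RR_apply : ∀ (t : ℕ) (B : Multiset (Fin m)),
    repeatMultiset ((uniformBin m hm).map (fun y => ({y} : Multiset (Fin m)))) t B =
      if Multiset.card B = t then multc B * ((m : ℝ≥0∞)⁻¹) ^ t else 0
  | 0, B => by
      rw [repeatMultiset, PMF.pure_apply]
      by_cases hB : B = 0
      · simp [hB, multc_zero]
      · simp [hB, Multiset.card_eq_zero]
  | t + 1, B => by
      rw [repeatMultiset, bind_map_singleton_apply]
      have hterm : ∀ y : Fin m,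
          ((repeatMultiset ((uniformBin m hm).map fun y => ({y} : Multiset (Fin m))) t).map
            (({y} : Multiset (Fin m)) + ·)) B
          = if y ∈ B then (if Multiset.card B = t + 1 then
              multc (B.erase y) * ((m : ℝ≥0∞)⁻¹) ^ t else 0) else 0 := by
        intro y
        rw [map_add_apply, Multiset.sub_singleton]
        by_cases hy : y ∈ B
        · rw [if_pos (Multiset.singleton_le.mpr hy), if_pos hy, RR_apply t]
          have : Multiset.card (B.erase y) = Multiset.card B - 1 := by
            rw [Multiset.card_erase_of_mem hy]; rfl
          rw [this]
          have hpos : 0 < Multiset.card B := Multiset.card_pos.mpr (by rintro rfl; simp at hy)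
          congr 1
          simp only [eq_iff_iff]
          omega
        · rw [if_neg (fun h => hy (Multiset.singleton_le.mp h)), if_neg hy]
      rw [Finset.sum_congr rfl fun y _ => by rw [hterm y]]
      by_cases hB : Multiset.card B = t + 1
      · have hB0 : B ≠ 0 := by rintro rfl; simp at hB
        simp only [hB, eq_self_iff_true, if_true]
        have : ∀ y : Fin m, (m : ℝ≥0∞)⁻¹ * (if y ∈ B then
            multc (B.erase y) * ((m : ℝ≥0∞)⁻¹) ^ t else 0)
            = ((m : ℝ≥0∞)⁻¹ * ((m : ℝ≥0∞)⁻¹) ^ t) * (if y ∈ B then multc (B.erase y) else 0) := by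
          intro y; split_ifs <;> ring
        rw [Finset.sum_congr rfl fun y _ => this y, ← Finset.mul_sum, sum_multc_erase B hB0]
        rw [pow_succ]
        ring
      · simp only [hB, if_false]
        simp

lemma repeatMultiset_add {α : Type*} (ν : PMF (Multiset α)) (a b : ℕ) :
    repeatMultiset ν (a + b) = (repeatMultiset ν a).bind fun A => (repeatMultiset ν b).map (A + ·) := by
  induction a with
  | zero =>
      rw [Nat.zero_add]
      show repeatMultiset ν b = (PMF.pure 0).bind fun A => (repeatMultiset ν b).map (A + ·)
      rw [PMF.pure_bind]
      rw [show ((0 : Multiset α) + ·) = id from funext fun x => zero_add x, PMF.map_id]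
  | succ a ih =>
      have h1 : a + 1 + b = a + b + 1 := Nat.succ_add a b
      rw [h1]
      show (ν.bind fun s => (repeatMultiset ν (a + b)).map (s + ·)) =
        (ν.bind fun s => (repeatMultiset ν a).map (s + ·)).bind fun A => (repeatMultiset ν b).map (A + ·)
      rw [ih, PMF.bind_bind]
      refine congrArg _ (funext fun s => ?_)
      rw [PMF.map_bind, PMF.bind_map]
      refine congrArg _ (funext fun A => ?_)
      rw [PMF.map_comp]
      congr 1
      funext C
      show s + (A + C) = (s + A) + C
      rw [add_assoc]


lemma TT_apply (p : ℝ≥0∞) (hp : p ≤ 1) : ∀ (n : ℕ) (B : Multiset (Fin m)),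
    repeatMultiset (trialM (uniformBin m hm) p hp) n B =
      (n.choose (Multiset.card B) : ℝ≥0∞) * p ^ (Multiset.card B) *
        (1 - p) ^ (n - Multiset.card B) * multc B * ((m : ℝ≥0∞)⁻¹) ^ (Multiset.card B)
  | 0, B => by
      rw [repeatMultiset, PMF.pure_apply]
      by_cases hB : B = 0
      · simp [hB, multc_zero]
      · rw [if_neg hB]
        have : Multiset.card B ≠ 0 := fun h => hB (Multiset.card_eq_zero.mp h)
        rw [Nat.choose_eq_zero_of_lt (by omega)]
        simp
  | n + 1, B => by
      rw [repeatMultiset]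
      set Tn := repeatMultiset (trialM (uniformBin m hm) p hp) n with hTn
      rw [trialM, PMF.bind_bind, PMF.bind_apply, tsum_fintype, Fintype.sum_bool]
      have hfalse : ((if (false : Bool) then (uniformBin m hm).map (fun x => ({x} : Multiset (Fin m)))
          else PMF.pure 0).bind
            fun s => Tn.map (s + ·)) B
          = Tn B := by
        simp only [Bool.false_eq_true, if_false, PMF.pure_bind]
        rw [show ((0 : Multiset (Fin m)) + ·) = id from funext fun x => zero_add x, PMF.map_id]
      have htrue : ((if (true : Bool) then (uniformBin m hm).map (fun x => ({x} : Multiset (Fin m)))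
          else PMF.pure 0).bind
            fun s => Tn.map (s + ·)) B
          = ∑ y : Fin m, (m : ℝ≥0∞)⁻¹ *
              (if y ∈ B then Tn (B.erase y) else 0) := by
        rw [if_pos rfl, bind_map_singleton_apply]
        refine Finset.sum_congr rfl fun y _ => ?_
        rw [map_add_apply, Multiset.sub_singleton]
        simp only [Multiset.singleton_le]
      rw [hfalse, htrue]; simp only [bernoulliENNReal, PMF.ofFintype_apply]
      simp only [cond_true, cond_false]
      by_cases hB : B = 0
      · subst hB
        simp only [Multiset.notMem_zero, if_false, mul_zero, Finset.sum_const_zero,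
          Multiset.card_zero, Nat.choose_zero_right, Nat.cast_one, pow_zero,
          Nat.sub_zero, multc_zero]
        rw [hTn, TT_apply p hp n 0]
        simp [multc_zero, pow_succ]
        ring
      · have hj : 1 ≤ Multiset.card B := Multiset.card_pos.mpr hB
        have hsum : ∑ y : Fin m, (m : ℝ≥0∞)⁻¹ *
              (if y ∈ B then Tn (B.erase y) else 0)
            = (m : ℝ≥0∞)⁻¹ * ((n.choose (Multiset.card B - 1) : ℝ≥0∞) *
                p ^ (Multiset.card B - 1) * (1 - p) ^ (n - (Multiset.card B - 1)) *
                ((m : ℝ≥0∞)⁻¹) ^ (Multiset.card B - 1) * multc B) := by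
          have hterm : ∀ y : Fin m,
              (if y ∈ B then Tn (B.erase y) else 0)
              = (n.choose (Multiset.card B - 1) : ℝ≥0∞) * p ^ (Multiset.card B - 1) *
                  (1 - p) ^ (n - (Multiset.card B - 1)) * ((m : ℝ≥0∞)⁻¹) ^ (Multiset.card B - 1) *
                  (if y ∈ B then multc (B.erase y) else 0) := by
            intro y
            split_ifs with hy
            · rw [hTn, TT_apply p hp n (B.erase y)]
              have hce : Multiset.card (B.erase y) = Multiset.card B - 1 := by
                rw [Multiset.card_erase_of_mem hy]; rfl
              rw [hce]; ring
            · rw [mul_zero]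
          rw [Finset.sum_congr rfl fun y _ => by rw [hterm y], ← Finset.mul_sum,
            ← Finset.mul_sum, sum_multc_erase B hB]
        rw [hsum, hTn, TT_apply p hp n B]
        exact step_alg p (1 - p) (multc B) ((m : ℝ≥0∞)⁻¹) n (Multiset.card B) hj

lemma conv_apply (p : ℝ≥0∞) (hp : p ≤ 1) (kk nn : ℕ) (B : Multiset (Fin m))
    (hkB : kk ≤ Multiset.card B) :
    ((repeatMultiset ((uniformBin m hm).map (fun y => ({y} : Multiset (Fin m)))) kk).bind
        fun A => (repeatMultiset (trialM (uniformBin m hm) p hp) nn).map (A + ·)) B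
      = (nn.choose (Multiset.card B - kk) : ℝ≥0∞) * p ^ (Multiset.card B - kk) *
          (1 - p) ^ (nn - (Multiset.card B - kk)) * multc B *
          ((m : ℝ≥0∞)⁻¹) ^ (Multiset.card B) := by
  set j := Multiset.card B - kk with hj
  set c : ℝ≥0∞ := (nn.choose j : ℝ≥0∞) * p ^ j * (1 - p) ^ (nn - j) with hc
  have hterm : ∀ A : Multiset (Fin m),
      repeatMultiset ((uniformBin m hm).map (fun y => ({y} : Multiset (Fin m)))) kk A *
        ((repeatMultiset (trialM (uniformBin m hm) p hp) nn).map (A + ·)) B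
      = c * (repeatMultiset ((uniformBin m hm).map (fun y => ({y} : Multiset (Fin m)))) kk A *
          ((repeatMultiset ((uniformBin m hm).map (fun y => ({y} : Multiset (Fin m)))) j).map
            (A + ·)) B) := by
    intro A
    rw [map_add_apply, map_add_apply]
    split_ifs with hAB
    · by_cases hA : Multiset.card A = kk
      · have hcard : Multiset.card (B - A) = j := by
          rw [Multiset.card_sub hAB, hA]
        rw [TT_apply hm p hp nn (B - A), RR_apply hm j (B - A), if_pos hcard, hcard, hc]
        ring
      · rw [RR_apply hm kk A, if_neg hA]
        ring
    · ring
  rw [PMF.bind_apply, tsum_congr hterm, ENNReal.tsum_mul_left, ← PMF.bind_apply,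
    ← repeatMultiset_add, show kk + j = Multiset.card B by omega, RR_apply hm _ B, if_pos rfl, hc]
  ring

end

theorem stmt7 (m s k n : ℕ) (hm : 0 < m) (hs : 0 < s) (hk : 0 < k) (hn : 0 < n) (hsm : s ≤ m)
    (p : ℝ) (hp0 : 0 ≤ p) (hp1 : p ≤ 1)
    (S : Finset (Fin m)) (hScard : S.card = s)
    (W : Fin m → ℕ) (w : ℕ) (hw : w = ∑ i, W i) (hkw : 1 + k ≤ w) (hwkn : w ≤ 1 + k + n) :
    (((MBIB m k n hm (ENNReal.ofReal p) (ENNReal.ofReal_le_one.mpr hp1) S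
        (Finset.card_pos.mp (hScard ▸ hs))).map (fun o i => o.count i)) W).toReal =
      (n.choose (w - 1 - k) : ℝ) * p ^ (w - 1 - k) * (1 - p) ^ (n - (w - 1 - k)) *
        (((w - 1).factorial : ℝ) / (s * ∏ i, ((W i).factorial : ℝ))) / (m : ℝ) ^ (w - 1) *
        (∑ i ∈ S, W i : ℕ) := by
  have hq1 : ENNReal.ofReal p ≤ 1 := ENNReal.ofReal_le_one.mpr hp1
  have hS : S.Nonempty := Finset.card_pos.mp (hScard ▸ hs)
  set q := ENNReal.ofReal p with hqdef
  set B : Multiset (Fin m) := ∑ i : Fin m, (W i) • ({i} : Multiset (Fin m)) with hBdef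
  have hcount : ∀ a : Fin m, B.count a = W a := by
    intro a
    rw [hBdef, Multiset.count_sum']
    rw [Finset.sum_congr rfl fun x _ => by
      rw [Multiset.count_nsmul, Multiset.count_singleton]]
    simp
  have hcard : Multiset.card B = w := by
    rw [hw, ← Multiset.sum_count_eq_card (s := Finset.univ) (fun a _ => Finset.mem_univ a)]
    exact Finset.sum_congr rfl fun a _ => hcount a
  have hmap : ((MBIB m k n hm q (ENNReal.ofReal_le_one.mpr hp1) S
        (Finset.card_pos.mp (hScard ▸ hs))).map (fun o i => o.count i)) W
      = MBIB m k n hm q (ENNReal.ofReal_le_one.mpr hp1) S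
          (Finset.card_pos.mp (hScard ▸ hs)) B := by
    rw [PMF.map_apply]
    refine (tsum_eq_single B fun o ho => ?_).trans (if_pos (funext fun i => (hcount i).symm))
    rw [if_neg]
    intro hWo
    refine ho (Multiset.ext.mpr fun a => ?_)
    rw [hcount a]
    exact (congrFun hWo a).symm
  have hinner : ∀ x : Fin m,
      ((repeatMultiset ((uniformBin m hm).map (fun y => ({y} : Multiset (Fin m)))) k).bind
        fun A => (repeatMultiset (trialM (uniformBin m hm) q hq1) n).map fun C => {x} + A + C)
      = (((repeatMultiset ((uniformBin m hm).map (fun y => ({y} : Multiset (Fin m)))) k).bind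
          fun A => (repeatMultiset (trialM (uniformBin m hm) q hq1) n).map (A + ·)).map
        (({x} : Multiset (Fin m)) + ·)) := by
    intro x
    rw [PMF.map_bind]
    refine congrArg _ (funext fun A => ?_)
    rw [PMF.map_comp]
    congr 1
    funext C
    show ({x} : Multiset (Fin m)) + A + C = {x} + (A + C)
    rw [add_assoc]
  have hval : MBIB m k n hm q hq1 S hS B
      = (s : ℝ≥0∞)⁻¹ * ((n.choose (w - 1 - k) : ℝ≥0∞) * q ^ (w - 1 - k) *
          (1 - q) ^ (n - (w - 1 - k))) * ((w - 1).factorial : ℝ≥0∞) *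
          (∏ i : Fin m, (((W i).factorial : ℝ≥0∞))⁻¹) * ((m : ℝ≥0∞)⁻¹) ^ (w - 1) *
          ((∑ x ∈ S, W x : ℕ) : ℝ≥0∞) := by
    rw [MBIB, PMF.bind_apply, tsum_fintype]
    have hterm : ∀ x : Fin m,
        (PMF.uniformOfFinset S hS) x *
          ((repeatMultiset ((uniformBin m hm).map (fun y => ({y} : Multiset (Fin m)))) k).bind
            fun A => (repeatMultiset (trialM (uniformBin m hm) q hq1) n).map fun C => {x} + A + C) B
        = if x ∈ S then (s : ℝ≥0∞)⁻¹ * ((n.choose (w - 1 - k) : ℝ≥0∞) * q ^ (w - 1 - k) *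
            (1 - q) ^ (n - (w - 1 - k))) * ((w - 1).factorial : ℝ≥0∞) *
            (∏ i : Fin m, (((W i).factorial : ℝ≥0∞))⁻¹) * ((m : ℝ≥0∞)⁻¹) ^ (w - 1) *
            (W x : ℝ≥0∞) else 0 := by
      intro x
      rw [hinner x, map_add_apply, Multiset.sub_singleton, PMF.uniformOfFinset_apply, hScard]
      simp only [Multiset.singleton_le]
      by_cases hxS : x ∈ S
      · rw [if_pos hxS, if_pos hxS]
        by_cases hxB : x ∈ B
        · rw [if_pos hxB]
          have hce : Multiset.card (B.erase x) = w - 1 := by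
            rw [Multiset.card_erase_of_mem hxB, hcard]; rfl
          rw [conv_apply hm q hq1 k n (B.erase x) (by rw [hce]; omega), hce,
            multc_erase B hxB, hcard, hcount x]
          have hPinv : ∏ i : Fin m, (((B.count i).factorial : ℝ≥0∞))⁻¹
              = ∏ i : Fin m, (((W i).factorial : ℝ≥0∞))⁻¹ :=
            Finset.prod_congr rfl fun i _ => by rw [hcount i]
          rw [hPinv]
          ring
        · rw [if_neg hxB, mul_zero]
          have hW0 : W x = 0 := by rw [← hcount x, Multiset.count_eq_zero_of_notMem hxB]
          rw [hW0]
          simp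
      · rw [if_neg hxS, if_neg hxS, zero_mul]
    rw [Finset.sum_congr rfl fun x _ => hterm x, Finset.sum_ite_mem, Finset.univ_inter,
      ← Finset.mul_sum, ← Nat.cast_sum]
  rw [hmap, hval]
  have h1q : (1 : ℝ≥0∞) - q = ENNReal.ofReal (1 - p) := by
    rw [ENNReal.ofReal_sub 1 hp0, ENNReal.ofReal_one, ← hqdef]
  have h1p : (0 : ℝ) ≤ 1 - p := by linarith
  rw [h1q, hqdef]
  simp only [ENNReal.toReal_mul, ENNReal.toReal_pow, ENNReal.toReal_inv, ENNReal.toReal_natCast,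
    ENNReal.toReal_prod, ENNReal.toReal_ofReal hp0, ENNReal.toReal_ofReal h1p]
  have hsne : (s : ℝ) ≠ 0 := Nat.cast_ne_zero.mpr hs.ne'
  have hmne : (m : ℝ) ≠ 0 := Nat.cast_ne_zero.mpr hm.ne'
  have hprodne : (∏ i : Fin m, ((W i).factorial : ℝ)) ≠ 0 := by positivity
  rw [Finset.prod_inv_distrib]
  field_simp
  have hpow : (1 / (m : ℝ)) ^ (w - 1) * (m : ℝ) ^ (w - 1) = 1 := by
    rw [← mul_pow, one_div_mul_cancel hmne, one_pow]
  linear_combination ((n.choose (w - 1 - k) : ℝ) * p ^ (w - 1 - k) * (1 - p) ^ (n - (w - 1 - k)) *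
    ((∑ x ∈ S, W x : ℕ) : ℝ)) * hpow
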